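/- Let X ∈ ℝ^{n×p} and y ∈ ℝⁿ, and suppose 1_n lies in the column space of X. Set K_X := (X Xᵀ)⁺. Then 1_nᵀ K_X 1_n > 0 and the minimum-norm OLS estimator (μ̂, β̂) = OLS(X,y) satisfies μ̂ = (1_nᵀ K_X y)/(1_nᵀ K_X 1_n) and β̂ = X⁺(y − μ̂ 1_n). -/

import Mathlib

open Finset Matrix

/-- The least-squares objective for OLS with an unpenalized intercept. -/
noncomputable def olsObj {n p : ℕ} (X : Matrix (Fin n) (Fin p) ℝ) (y : Fin n → ℝ)
    (q : ℝ × (Fin p → ℝ)) : ℝ :=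
  ∑ i, (y i - X.mulVec q.2 i - q.1) ^ 2

/-- The set `S_{X,y}` of least-squares minimizers. -/
noncomputable def olsSet {n p : ℕ} (X : Matrix (Fin n) (Fin p) ℝ) (y : Fin n → ℝ) :
    Set (ℝ × (Fin p → ℝ)) :=
  {q | ∀ q', olsObj X y q ≤ olsObj X y q'}

/-- `Ap` is the Moore–Penrose pseudoinverse of `A`. -/
def IsMoorePenrose {m n : ℕ} (A : Matrix (Fin m) (Fin n) ℝ)
    (Ap : Matrix (Fin n) (Fin m) ℝ) : Prop :=
  A * Ap * A = A ∧ Ap * A * Ap = Ap ∧ (A * Ap)ᵀ = A * Ap ∧ (Ap * A)ᵀ = Ap * A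

lemma mul_transpose_self_eq_zero' {m k : ℕ} (A : Matrix (Fin m) (Fin k) ℝ)
    (h : A * Aᵀ = 0) : A = 0 := by
  rw [← Matrix.self_mul_conjTranspose_eq_zero (A := A)]
  convert h using 2
  exact Matrix.conjTranspose_eq_transpose_of_trivial A

lemma mp_unique {m k : ℕ} (A : Matrix (Fin m) (Fin k) ℝ) (P Q : Matrix (Fin k) (Fin m) ℝ)
    (hP : IsMoorePenrose A P) (hQ : IsMoorePenrose A Q) : P = Q := by
  obtain ⟨hP1, hP2, hP3, hP4⟩ := hP
  obtain ⟨hQ1, hQ2, hQ3, hQ4⟩ := hQ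
  have hAP : A * P = A * Q := by
    calc A * P = (A*P)ᵀ := hP3.symm
    _ = Pᵀ * Aᵀ := by rw [Matrix.transpose_mul]
    _ = Pᵀ * ((A*Q)*A)ᵀ := by rw [hQ1]
    _ = Pᵀ * (Aᵀ * (A*Q)ᵀ) := by rw [Matrix.transpose_mul]
    _ = Pᵀ * (Aᵀ * (A*Q)) := by rw [hQ3]
    _ = (Pᵀ * Aᵀ) * (A*Q) := by rw [Matrix.mul_assoc]
    _ = (A*P)ᵀ * (A*Q) := by rw [Matrix.transpose_mul]
    _ = (A*P) * (A*Q) := by rw [hP3]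
    _ = (A*P*A) * Q := by simp only [Matrix.mul_assoc]
    _ = A * Q := by rw [hP1]
  have hPA : P * A = Q * A := by
    calc P * A = (P*A)ᵀ := hP4.symm
    _ = Aᵀ * Pᵀ := by rw [Matrix.transpose_mul]
    _ = (A*(Q*A))ᵀ * Pᵀ := by rw [← Matrix.mul_assoc, hQ1]
    _ = ((Q*A)ᵀ * Aᵀ) * Pᵀ := by rw [Matrix.transpose_mul]
    _ = ((Q*A) * Aᵀ) * Pᵀ := by rw [hQ4]
    _ = (Q*A) * (Aᵀ * Pᵀ) := by rw [Matrix.mul_assoc]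
    _ = (Q*A) * (P*A)ᵀ := by rw [Matrix.transpose_mul]
    _ = (Q*A) * (P*A) := by rw [hP4]
    _ = Q * (A*P*A) := by simp only [Matrix.mul_assoc]
    _ = Q * A := by rw [hP1]
  calc P = P*A*P := hP2.symm
  _ = (Q*A)*P := by rw [hPA]
  _ = Q*(A*P) := Matrix.mul_assoc _ _ _
  _ = Q*(A*Q) := by rw [hAP]
  _ = Q*A*Q := (Matrix.mul_assoc _ _ _).symm
  _ = Q := hQ2

lemma dot_mulVec_transpose {m k : ℕ} (A : Matrix (Fin m) (Fin k) ℝ)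
    (v : Fin k → ℝ) (w : Fin m → ℝ) : v ⬝ᵥ Aᵀ.mulVec w = (A.mulVec v) ⬝ᵥ w := by
  rw [Matrix.dotProduct_mulVec, Matrix.vecMul_transpose]

lemma dot_self_nonneg {k : ℕ} (v : Fin k → ℝ) : 0 ≤ v ⬝ᵥ v :=
  Finset.sum_nonneg fun _ _ => mul_self_nonneg _

-- key algebraic identities
lemma kp_symm {n p : ℕ} (X : Matrix (Fin n) (Fin p) ℝ)
    (Kp : Matrix (Fin n) (Fin n) ℝ) (hKp : IsMoorePenrose (X * Xᵀ) Kp) : Kpᵀ = Kp := by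
  have hM : (X*Xᵀ)ᵀ = X*Xᵀ := by rw [Matrix.transpose_mul, Matrix.transpose_transpose]
  refine mp_unique (X*Xᵀ) Kpᵀ Kp ⟨?_, ?_, ?_, ?_⟩ hKp
  · have := congrArg Matrix.transpose hKp.1
    simp only [Matrix.transpose_mul, hM] at this
    simpa only [Matrix.mul_assoc] using this
  · have := congrArg Matrix.transpose hKp.2.1
    simp only [Matrix.transpose_mul, hM] at this
    simpa only [Matrix.mul_assoc] using this
  · have hKM : Kp*(X*Xᵀ) = (X*Xᵀ)*Kpᵀ := by
      conv_lhs => rw [← hKp.2.2.2]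
      rw [Matrix.transpose_mul, hM]
    rw [← hKM]; exact hKp.2.2.2
  · have hMK : (X*Xᵀ)*Kp = Kpᵀ*(X*Xᵀ) := by
      conv_lhs => rw [← hKp.2.2.1]
      rw [Matrix.transpose_mul, hM]
    rw [← hMK]; exact hKp.2.2.1

lemma xp_eq {n p : ℕ} (X : Matrix (Fin n) (Fin p) ℝ)
    (Xp : Matrix (Fin p) (Fin n) ℝ) (hXp : IsMoorePenrose X Xp)
    (Kp : Matrix (Fin n) (Fin n) ℝ) (hKp : IsMoorePenrose (X * Xᵀ) Kp) :
    Xp = Xᵀ * Kp := by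
  have hKsym : Kpᵀ = Kp := kp_symm X Kp hKp
  -- (X Xᵀ) Kp X = X
  have h1 : ((1 : Matrix (Fin n) (Fin n) ℝ) - (X*Xᵀ)*Kp) * (X*Xᵀ) = 0 := by
    rw [Matrix.sub_mul, Matrix.one_mul, hKp.1, sub_self]
  have h2 : (((1 : Matrix (Fin n) (Fin n) ℝ) - (X*Xᵀ)*Kp) * X) *
      (((1 : Matrix (Fin n) (Fin n) ℝ) - (X*Xᵀ)*Kp) * X)ᵀ = 0 := by
    rw [Matrix.transpose_mul]
    calc ((1 - (X*Xᵀ)*Kp) * X) * (Xᵀ * ((1:Matrix (Fin n) (Fin n) ℝ) - (X*Xᵀ)*Kp)ᵀ)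
        = ((1 - (X*Xᵀ)*Kp) * (X*Xᵀ)) * ((1:Matrix (Fin n) (Fin n) ℝ) - (X*Xᵀ)*Kp)ᵀ := by
          simp only [Matrix.mul_assoc]
      _ = 0 := by rw [h1, Matrix.zero_mul]
  have hC : ((1 : Matrix (Fin n) (Fin n) ℝ) - (X*Xᵀ)*Kp) * X = 0 :=
    mul_transpose_self_eq_zero' _ h2
  have hMKX : (X*Xᵀ)*Kp*X = X := by
    rw [Matrix.sub_mul, Matrix.one_mul, sub_eq_zero] at hC
    exact hC.symm
  refine mp_unique X Xp (Xᵀ*Kp) hXp ⟨?_, ?_, ?_, ?_⟩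
  · simp only [← Matrix.mul_assoc]; simpa only [← Matrix.mul_assoc] using hMKX
  · simp only [Matrix.mul_assoc]
    rw [show Kp*(X*(Xᵀ*Kp)) = Kp from by simpa only [Matrix.mul_assoc] using hKp.2.1]
  · simp only [← Matrix.mul_assoc]; exact hKp.2.2.1
  · simp only [Matrix.transpose_mul, Matrix.transpose_transpose, hKsym, Matrix.mul_assoc]

lemma xpt_xp {n p : ℕ} (X : Matrix (Fin n) (Fin p) ℝ)
    (Xp : Matrix (Fin p) (Fin n) ℝ) (hXp : IsMoorePenrose X Xp)
    (Kp : Matrix (Fin n) (Fin n) ℝ) (hKp : IsMoorePenrose (X * Xᵀ) Kp) :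
    Xpᵀ * Xp = Kp := by
  rw [xp_eq X Xp hXp Kp hKp]
  simp only [Matrix.transpose_mul, Matrix.transpose_transpose, kp_symm X Kp hKp,
    Matrix.mul_assoc]
  simpa only [Matrix.mul_assoc] using hKp.2.1
theorem stmt2 {n p : ℕ} (hn : 1 ≤ n) (X : Matrix (Fin n) (Fin p) ℝ) (y : Fin n → ℝ)
    (Xp : Matrix (Fin p) (Fin n) ℝ) (hXp : IsMoorePenrose X Xp)
    (Kp : Matrix (Fin n) (Fin n) ℝ) (hKp : IsMoorePenrose (X * Xᵀ) Kp)
    (hcol : ∃ β : Fin p → ℝ, X.mulVec β = fun _ => (1 : ℝ)) :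
    (0 : ℝ) < (fun _ => (1 : ℝ)) ⬝ᵥ (Kp.mulVec fun _ => (1 : ℝ)) ∧
    (∃ q : ℝ × (Fin p → ℝ), q ∈ olsSet X y ∧
        ∀ q' ∈ olsSet X y, ∑ j, q.2 j ^ 2 ≤ ∑ j, q'.2 j ^ 2) ∧
    ∀ (μhat : ℝ) (βhat : Fin p → ℝ),
      (μhat, βhat) ∈ olsSet X y →
      (∀ q' ∈ olsSet X y, ∑ j, βhat j ^ 2 ≤ ∑ j, q'.2 j ^ 2) →
      μhat = ((fun _ => (1 : ℝ)) ⬝ᵥ (Kp.mulVec y)) /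
             ((fun _ => (1 : ℝ)) ⬝ᵥ (Kp.mulVec fun _ => (1 : ℝ))) ∧
      βhat = Xp.mulVec (y - μhat • fun _ => (1 : ℝ)) := by
  obtain ⟨β₀, hβ₀⟩ := hcol
  set o : Fin n → ℝ := fun _ => (1 : ℝ) with ho
  set u : Fin p → ℝ := Xp.mulVec o with hu
  set w : Fin p → ℝ := Xp.mulVec y with hw
  set yh : Fin n → ℝ := (X*Xp).mulVec y with hyh
  -- dot products through Kp
  have hXtX : Xpᵀ * Xp = Kp := xpt_xp X Xp hXp Kp hKp
  have hdot : ∀ v z : Fin n → ℝ,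
      v ⬝ᵥ Kp.mulVec z = (Xp.mulVec v) ⬝ᵥ (Xp.mulVec z) := by
    intro v z
    rw [← hXtX, ← Matrix.mulVec_mulVec, dot_mulVec_transpose]
  -- basic facts
  have hXu : X.mulVec u = o := by
    rw [hu, ← hβ₀, Matrix.mulVec_mulVec, Matrix.mulVec_mulVec, hXp.1]
  have hXw : X.mulVec w = yh := by rw [hw, hyh, Matrix.mulVec_mulVec]
  have hone : o ⟨0, hn⟩ = 1 := rfl
  have hune : u ≠ 0 := by
    intro h0
    have : o = 0 := by rw [← hXu, h0, Matrix.mulVec_zero]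
    have := congrFun this ⟨0, hn⟩
    rw [hone] at this
    exact one_ne_zero this
  have ha : 0 < u ⬝ᵥ u :=
    lt_of_le_of_ne (dot_self_nonneg u)
      (fun h => hune (dotProduct_self_eq_zero.mp h.symm))
  -- residual orthogonality
  have hXtP : Xᵀ*(X*Xp) = Xᵀ := by
    have := congrArg Matrix.transpose hXp.1
    rwa [Matrix.transpose_mul, hXp.2.2.1] at this
  have hXte : Xᵀ.mulVec (y - yh) = 0 := by
    rw [Matrix.mulVec_sub, hyh, Matrix.mulVec_mulVec, hXtP, sub_self]
  have horth : ∀ v : Fin p → ℝ, (y - yh) ⬝ᵥ X.mulVec v = 0 := by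
    intro v
    rw [Matrix.dotProduct_mulVec, ← Matrix.mulVec_transpose, hXte, zero_dotProduct]
  -- objective decomposition
  have hsq : ∀ {k : ℕ} (v : Fin k → ℝ), ∑ j, v j ^ 2 = v ⬝ᵥ v := by
    intro k v; simp [dotProduct, sq]
  have hobj : ∀ q : ℝ × (Fin p → ℝ), olsObj X y q =
      (y - yh) ⬝ᵥ (y - yh) +
      (yh - X.mulVec q.2 - q.1 • o) ⬝ᵥ (yh - X.mulVec q.2 - q.1 • o) := by
    intro q
    have hr : olsObj X y q =
        (y - X.mulVec q.2 - q.1 • o) ⬝ᵥ (y - X.mulVec q.2 - q.1 • o) := by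
      unfold olsObj
      refine Finset.sum_congr rfl fun i _ => ?_
      simp [ho, Pi.sub_apply, Pi.smul_apply, sq]
    have hsplit : y - X.mulVec q.2 - q.1 • o =
        (y - yh) + (yh - X.mulVec q.2 - q.1 • o) := by abel
    have hsX : yh - X.mulVec q.2 - q.1 • o =
        X.mulVec (Xp.mulVec y - q.2 - q.1 • β₀) := by
      rw [Matrix.mulVec_sub, Matrix.mulVec_sub, Matrix.mulVec_smul, hβ₀,
        Matrix.mulVec_mulVec, ← hyh]
    have h0 : (y - yh) ⬝ᵥ (yh - X.mulVec q.2 - q.1 • o) = 0 := by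
      rw [hsX]; exact horth _
    have h0' : (yh - X.mulVec q.2 - q.1 • o) ⬝ᵥ (y - yh) = 0 := by
      rw [dotProduct_comm]; exact h0
    rw [hr, hsplit, add_dotProduct, dotProduct_add, dotProduct_add, h0, h0']
    ring
  -- membership characterization
  have hmem : ∀ q : ℝ × (Fin p → ℝ),
      q ∈ olsSet X y ↔ X.mulVec q.2 + q.1 • o = yh := by
    intro q
    have hbase : olsObj X y (0, w) = (y - yh) ⬝ᵥ (y - yh) := by
      rw [hobj]
      simp [hXw]
    constructor
    · intro h
      have hle := h (0, w)
      rw [hobj q, hbase] at hle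
      have hz : (yh - X.mulVec q.2 - q.1 • o) ⬝ᵥ (yh - X.mulVec q.2 - q.1 • o) = 0 :=
        le_antisymm (by linarith) (dot_self_nonneg _)
      have hz2 := dotProduct_self_eq_zero.mp hz
      rw [sub_sub] at hz2
      exact (sub_eq_zero.mp hz2).symm
    · intro h q'
      rw [hobj q, hobj q']
      have hz : yh - X.mulVec q.2 - q.1 • o = 0 := by
        rw [sub_sub, ← h, sub_self]
      rw [hz]
      have := dot_self_nonneg (yh - X.mulVec q'.2 - q'.1 • o)
      simp only [dotProduct_zero, zero_dotProduct]
      linarith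
  -- minimum-norm solution for each μ
  set b : ℝ → (Fin p → ℝ) := fun μ => Xp.mulVec (y - μ • o) with hbdef
  have hb : ∀ μ, b μ = w - μ • u := by
    intro μ
    rw [hbdef]
    simp only [Matrix.mulVec_sub, Matrix.mulVec_smul, hw, hu]
  have hbmem : ∀ μ, (μ, b μ) ∈ olsSet X y := by
    intro μ
    rw [hmem]
    show X.mulVec (b μ) + μ • o = yh
    rw [hb, Matrix.mulVec_sub, Matrix.mulVec_smul, hXu, hXw]
    abel
  have hdecomp : ∀ (μ : ℝ) (β : Fin p → ℝ), X.mulVec β + μ • o = yh →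
      β ⬝ᵥ β = (b μ) ⬝ᵥ (b μ) + (β - b μ) ⬝ᵥ (β - b μ) := by
    intro μ β hβ
    have hXb : X.mulVec (b μ) + μ • o = yh := (hmem (μ, b μ)).mp (hbmem μ)
    have hXd : X.mulVec (β - b μ) = 0 := by
      rw [Matrix.mulVec_sub]
      have : X.mulVec β = X.mulVec (b μ) := by
        have h1 : X.mulVec β = yh - μ • o := by rw [← hβ]; abel
        have h2 : X.mulVec (b μ) = yh - μ • o := by rw [← hXb]; abel
        rw [h1, h2]
      rw [this, sub_self]
    have hXptd : Xpᵀ.mulVec (β - b μ) = 0 := by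
      have hXpt : Xpᵀ = Xpᵀ*(Xp*X) := by
        conv_lhs => rw [show Xp = Xp*X*Xp from hXp.2.1.symm]
        rw [Matrix.transpose_mul, hXp.2.2.2]
      rw [hXpt, ← Matrix.mulVec_mulVec, ← Matrix.mulVec_mulVec, hXd,
        Matrix.mulVec_zero, Matrix.mulVec_zero]
    have horth2 : (b μ) ⬝ᵥ (β - b μ) = 0 := by
      rw [hbdef]
      show (Xp.mulVec (y - μ • o)) ⬝ᵥ (β - b μ) = 0
      rw [← dot_mulVec_transpose Xp (y - μ • o) (β - b μ), hXptd, dotProduct_zero]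
    have hβeq : β = b μ + (β - b μ) := by abel
    calc β ⬝ᵥ β = (b μ + (β - b μ)) ⬝ᵥ (b μ + (β - b μ)) := by rw [← hβeq]
    _ = (b μ) ⬝ᵥ (b μ) + (b μ) ⬝ᵥ (β - b μ) + ((β - b μ) ⬝ᵥ (b μ) + (β - b μ) ⬝ᵥ (β - b μ)) := by
        rw [add_dotProduct, dotProduct_add, dotProduct_add]
    _ = (b μ) ⬝ᵥ (b μ) + (β - b μ) ⬝ᵥ (β - b μ) := by
        rw [horth2, dotProduct_comm (β - b μ) (b μ), horth2]; ring
  -- the quadratic in μ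
  set μs : ℝ := (u ⬝ᵥ w) / (u ⬝ᵥ u) with hμs
  have hexpand : ∀ μ : ℝ, (b μ) ⬝ᵥ (b μ) =
      w ⬝ᵥ w - 2*μ*(u ⬝ᵥ w) + μ^2*(u ⬝ᵥ u) := by
    intro μ
    rw [hb]
    simp [sub_dotProduct, dotProduct_sub, smul_dotProduct, dotProduct_smul,
      dotProduct_comm w u, smul_eq_mul]
    ring
  have hg : ∀ μ : ℝ, (b μ) ⬝ᵥ (b μ) = (b μs) ⬝ᵥ (b μs) + (u ⬝ᵥ u)*(μ - μs)^2 := by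
    intro μ
    rw [hexpand, hexpand, hμs]
    have hane : u ⬝ᵥ u ≠ 0 := ne_of_gt ha
    field_simp
    ring
  refine ⟨by rw [hdot]; exact ha, ⟨(μs, b μs), hbmem μs, ?_⟩, ?_⟩
  · intro q' hq'
    have hX' : X.mulVec q'.2 + q'.1 • o = yh := (hmem q').mp hq'
    have hd := hdecomp q'.1 q'.2 hX'
    have hgq := hg q'.1
    have h1 := dot_self_nonneg (q'.2 - b q'.1)
    have h2 := sq_nonneg (q'.1 - μs)
    have h3 : 0 ≤ (u ⬝ᵥ u)*(q'.1 - μs)^2 := mul_nonneg (le_of_lt ha) h2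
    rw [hsq, hsq]
    show (b μs) ⬝ᵥ (b μs) ≤ q'.2 ⬝ᵥ q'.2
    linarith
  · intro μhat βhat hmem' hmin
    have hX' : X.mulVec βhat + μhat • o = yh := (hmem (μhat, βhat)).mp hmem'
    have hd := hdecomp μhat βhat hX'
    have hgq := hg μhat
    have hle : βhat ⬝ᵥ βhat ≤ (b μs) ⬝ᵥ (b μs) := by
      have := hmin (μs, b μs) (hbmem μs)
      rw [hsq, hsq] at this
      exact this
    have h1 := dot_self_nonneg (βhat - b μhat)
    have h3 : 0 ≤ (u ⬝ᵥ u)*(μhat - μs)^2 := mul_nonneg (le_of_lt ha) (sq_nonneg _)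
    have hzero1 : (u ⬝ᵥ u)*(μhat - μs)^2 = 0 := le_antisymm (by linarith) h3
    have hzero2 : (βhat - b μhat) ⬝ᵥ (βhat - b μhat) = 0 := le_antisymm (by linarith) h1
    have hμeq : μhat = μs := by
      have : (μhat - μs)^2 = 0 := by
        rcases mul_eq_zero.mp hzero1 with h | h
        · exact absurd h (ne_of_gt ha)
        · exact h
      have := pow_eq_zero_iff (n := 2) (by norm_num) |>.mp this
      linarith [sub_eq_zero.mp this]
    have hβeq : βhat = b μhat := by
      have := dotProduct_self_eq_zero.mp hzero2
      exact sub_eq_zero.mp this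
    constructor
    · rw [hμeq, hμs, hdot, hdot, hu, hw]
    · rw [hβeq, hbdef]
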